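/- Let π_B, π_C, π_D > 0 with π_B + π_C + π_D = 1. Define the Bradley-Terry win probabilities p_BC = π_B/(π_B + π_C), p_BD = π_B/(π_B + π_D), p_CD = π_C/(π_C + π_D), and the pool-win probabilities q_B = p_BC·p_BD and q_C = (1 − p_BC)·p_CD. Then q_B · π_C²·(1 − π_C) = q_C · π_B²·(1 − π_B); equivalently q_B/q_C = f(π_B)/f(π_C) where f(x) = x²·(1 − x). -/
import Mathlib

/-- In a three-player pool under the Bradley-Terry model without draws, the
ratio of pool-win probabilities is f(π_B)/f(π_C) with f(x) = x²(1 − x). -/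
theorem pool_win_ratio (πB πC πD : ℝ) (hB : 0 < πB) (hC : 0 < πC) (hD : 0 < πD)
    (hsum : πB + πC + πD = 1)
    (pBC pBD pCD qB qC : ℝ)
    (hpBC : pBC = πB / (πB + πC)) (hpBD : pBD = πB / (πB + πD))
    (hpCD : pCD = πC / (πC + πD))
    (hqB : qB = pBC * pBD) (hqC : qC = (1 - pBC) * pCD) :
    qB * (πC ^ 2 * (1 - πC)) = qC * (πB ^ 2 * (1 - πB)) := by
  have h1 : πB + πC ≠ 0 := by positivity
  have h2 : πB + πD ≠ 0 := by positivity
  have h3 : πC + πD ≠ 0 := by positivity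
  have e1 : 1 - πC = πB + πD := by linarith
  have e2 : 1 - πB = πC + πD := by linarith
  subst hqB hqC hpBC hpBD hpCD
  rw [e1, e2]
  field_simp
  ring
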